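/- arXiv:2302.13686 — 2 statements merged into one kernel-verified Lean document; each statement's English description precedes it below -/
import Mathlib

section
/- Let n ≥ 2, I = {0,1,…,n}, and let A be the affine Cartan matrix of type A_n^{(1)}: a_{ii} = 2, a_{ij} = -1 if i − j ≡ ±1 (mod n+1), and a_{ij} = 0 otherwise; set q_i = p for all i ∈ I. Define z_i = x_{i-1}^{-1} x_i for 1 ≤ i ≤ n and z_0 = x_0 x_n^{-1} (so that y_i = z_i z_{i+1}^{-1}, indices read modulo n+1). Then for every b ∈ ℂ^×, the tuple φ_i = {p·b·z_i}·{b·z_{i+1}} (i ∈ I, indices modulo n+1) satisfies the shiftability system for A. -/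
noncomputable section

/-- The Laurent polynomial algebra `ℂ[x_i^{±1} : i ∈ ι]`, realized as the group algebra of the
free abelian group `ι → ℤ` over `ℂ` (for `ι` finite this is `ℤ^ι`). -/
abbrev LaurentAlg (ι : Type*) : Type _ := AddMonoidAlgebra ℂ (ι → ℤ)

/-- The monomial `∏_i x_i^{μ i}`. -/
def mono {ι : Type*} (μ : ι → ℤ) : LaurentAlg ι := AddMonoidAlgebra.single μ 1

lemma mono_zero {ι : Type*} : mono (0 : ι → ℤ) = 1 := rfl

lemma mono_add {ι : Type*} (μ ν : ι → ℤ) : mono (μ + ν) = mono μ * mono ν := by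
  simp [mono, AddMonoidAlgebra.single_mul_single]

/-- The auxiliary monoid homomorphism `μ ↦ c^{-μ i} · x^μ` underlying `ζ_i`. -/
def zetaHom {ι : Type*} (c : ℂˣ) (i : ι) : Multiplicative (ι → ℤ) →* LaurentAlg ι where
  toFun μ := ((c ^ (-(Multiplicative.toAdd μ i)) : ℂˣ) : ℂ) • mono (Multiplicative.toAdd μ)
  map_one' := by
    simp [mono_zero]
  map_mul' μ ν := by
    show ((c ^ (-(Multiplicative.toAdd (μ * ν) i)) : ℂˣ) : ℂ) • mono (Multiplicative.toAdd (μ * ν)) = _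
    have h : Multiplicative.toAdd (μ * ν) = Multiplicative.toAdd μ + Multiplicative.toAdd ν := rfl
    rw [h, mono_add, Pi.add_apply, neg_add, zpow_add, Units.val_mul, mul_smul,
      smul_mul_assoc, mul_smul_comm]

/-- The `ℂ`-algebra endomorphism `ζ_i` of the Laurent polynomial algebra determined by
`ζ_i(x_j) = c^{-δ_{ij}} x_j` (its inverse automorphism is `zeta c⁻¹ i`). -/
def zeta {ι : Type*} (c : ℂˣ) (i : ι) : LaurentAlg ι →ₐ[ℂ] LaurentAlg ι :=
  AddMonoidAlgebra.lift ℂ (LaurentAlg ι) (ι → ℤ) (zetaHom c i)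

/-- The element `{u}_s = (u - u⁻¹)/(s - s⁻¹)` for the unit `u = c · x^μ` of the Laurent
polynomial algebra (whose inverse is `c⁻¹ · x^{-μ}`). -/
def brk {ι : Type*} (s c : ℂ) (μ : ι → ℤ) : LaurentAlg ι :=
  ((s - s⁻¹)⁻¹ : ℂ) • (c • mono μ - c⁻¹ • mono (-μ))

/-- The shiftability system (4.1) for the integer matrix `a` with parameters `q i`:
`ζ_i(φ_i) − φ_i = {y_i}_i` for all `i`, and `φ_i φ_j = ζ_j^{-1}(φ_i)·ζ_i^{-1}(φ_j)` for `i ≠ j`,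
where `y_i = ∏_j x_j^{a j i}`. -/
def ShiftSystem {ι : Type*} (a : ι → ι → ℤ) (q : ι → ℂˣ) (φ : ι → LaurentAlg ι) : Prop :=
  (∀ i, zeta (q i) i (φ i) - φ i = brk ((q i : ℂ)) 1 (fun j => a j i)) ∧
  (∀ i j, i ≠ j → φ i * φ j = zeta (q j)⁻¹ j (φ i) * zeta (q i)⁻¹ i (φ j))

/-- The exponent vector of the single variable `x_k`. -/
def xvec {ι : Type*} [DecidableEq ι] (k : ι) : ι → ℤ := fun j => if j = k then 1 else 0

end

noncomputable section

lemma zeta_mono {ι : Type*} (c : ℂˣ) (i : ι) (μ : ι → ℤ) :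
    zeta c i (mono μ) = ((c:ℂ) ^ (-(μ i))) • mono μ := by
  show AddMonoidAlgebra.lift ℂ (LaurentAlg ι) (ι → ℤ) (zetaHom c i) (AddMonoidAlgebra.single μ 1) = _
  rw [AddMonoidAlgebra.lift_single]
  show (1:ℂ) • (((c ^ (-(μ i)) : ℂˣ) : ℂ) • mono μ) = _
  rw [one_smul, ← Units.val_zpow_eq_zpow_val]

lemma zeta_brk {ι : Type*} (c : ℂˣ) (i : ι) (s e : ℂ) (μ : ι → ℤ) :
    zeta c i (brk s e μ) = brk s (((c:ℂ) ^ (-(μ i))) * e) μ := by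
  have hne : ((c:ℂ)^(-(μ i)))⁻¹ = (c:ℂ)^(μ i) := by
    rw [← zpow_neg, neg_neg]
  simp only [brk, map_smul, map_sub, zeta_mono, Pi.neg_apply, smul_smul]
  rw [mul_inv, hne]
  ring_nf

lemma brk_key {ι : Type*} (P B : ℂ) (hB : B ≠ 0) (u v : ι → ℤ) :
    brk P B u * brk P (P*B) v - brk P (P*B) u * brk P B v = brk P 1 (u - v) := by
  have m1 : mono (u - v) = mono u * mono (-v) := by rw [sub_eq_add_neg, mono_add]
  have m2 : mono (-(u - v)) = mono (-u) * mono v := by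
    rw [neg_sub, sub_eq_add_neg, mono_add, mul_comm]
  have hb : algebraMap ℂ (LaurentAlg ι) B * algebraMap ℂ (LaurentAlg ι) B⁻¹ = 1 := by
    rw [← map_mul, mul_inv_cancel₀ hB, map_one]
  have hd0 : (P - P⁻¹)⁻¹ * (P - P⁻¹)⁻¹ * (P - P⁻¹) = (P - P⁻¹)⁻¹ := by
    rcases eq_or_ne (P - P⁻¹) 0 with h|h
    · simp [h]
    · field_simp
  have hd : algebraMap ℂ (LaurentAlg ι) (P-P⁻¹)⁻¹ * algebraMap ℂ (LaurentAlg ι) (P-P⁻¹)⁻¹ *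
      (algebraMap ℂ (LaurentAlg ι) P - algebraMap ℂ (LaurentAlg ι) P⁻¹)
      = algebraMap ℂ (LaurentAlg ι) (P-P⁻¹)⁻¹ := by
    rw [← map_sub, ← map_mul, ← map_mul, hd0]
  simp only [brk, Algebra.smul_def, mul_inv, map_mul, mul_sub, m1, m2, map_one, inv_one, one_mul]
  linear_combination
    (algebraMap ℂ (LaurentAlg ι) (P-P⁻¹)⁻¹ * algebraMap ℂ (LaurentAlg ι) (P-P⁻¹)⁻¹ *
      (algebraMap ℂ (LaurentAlg ι) P - algebraMap ℂ (LaurentAlg ι) P⁻¹) *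
      (mono u * mono (-v) - mono (-u) * mono v)) * hb
    + (mono u * mono (-v) - mono (-u) * mono v) * hd

/-- For the affine Cartan matrix of type `A_n^{(1)}`, `n ≥ 2` (indexed by
`Fin (n+1)` with adjacency mod `n+1`, all `q_i = p`), with `z_i = x_{i-1}⁻¹ x_i`
(indices mod `n+1`, so `z_0 = x_0 x_n⁻¹`), the tuple `φ_i = {p·b·z_i}·{b·z_{i+1}}`
(indices mod `n+1`) solves the shiftability system, for every `b ∈ ℂˣ`. -/
theorem shiftability_An_aff (n : ℕ) (hn : 2 ≤ n)
    (p : ℂˣ) (hp : ∀ m : ℕ, 0 < m → p ^ m ≠ 1) (b : ℂˣ) :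
    ShiftSystem
      (fun i j : Fin (n + 1) => if i = j then 2 else if j = i + 1 ∨ i = j + 1 then -1 else 0)
      (fun _ : Fin (n + 1) => p)
      (fun i : Fin (n + 1) =>
        brk (p : ℂ) ((p : ℂ) * (b : ℂ)) (xvec i - xvec (i - 1)) *
          brk (p : ℂ) (b : ℂ) (xvec (i + 1) - xvec i)) := by
  have hP : (p:ℂ) ≠ 0 := Units.ne_zero p
  have hB : (b:ℂ) ≠ 0 := Units.ne_zero b
  have h1 : (1 : Fin (n+1)) ≠ 0 := by
    rw [Ne, Fin.one_eq_zero_iff]; omega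
  have h2 : (2 : Fin (n+1)) ≠ 0 := by
    have : (open Fin.NatCast in ((2:ℕ) : Fin (n+1))) ≠ 0 := by
      rw [Ne, Fin.natCast_eq_zero]
      intro hd
      have := Nat.le_of_dvd (by norm_num) hd
      omega
    simpa using this
  constructor
  · -- first equation
    intro i
    have d1 : ¬ (i : Fin (n+1)) = i - 1 := fun h => h1 (by (open Fin.CommRing in linear_combination h))
    have d2 : ¬ (i : Fin (n+1)) = i + 1 := fun h => h1 (by (open Fin.CommRing in linear_combination -h))
    have d2' : ¬ (i + 1 : Fin (n+1)) = i := fun h => h1 (by (open Fin.CommRing in linear_combination h))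
    have d3 : ¬ (i + 1 : Fin (n+1)) = i - 1 := fun h => h2 (by (open Fin.CommRing in linear_combination h))
    have eU : (xvec i - xvec (i-1) : Fin (n+1) → ℤ) i = 1 := by
      simp [xvec, d1]
    have eV : (xvec (i+1) - xvec i : Fin (n+1) → ℤ) i = -1 := by
      simp [xvec, d2]
    have c1 : (p:ℂ)^(-(1:ℤ)) * ((p:ℂ)*(b:ℂ)) = (b:ℂ) := by
      rw [zpow_neg, zpow_one, inv_mul_cancel_left₀ hP]
    have c2 : (p:ℂ)^(-(-1:ℤ)) * (b:ℂ) = (p:ℂ)*(b:ℂ) := by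
      rw [neg_neg, zpow_one]
    simp only [map_mul, zeta_brk, eU, eV, c1, c2]
    rw [brk_key _ _ hB]
    congr 1
    funext j
    simp only [Pi.sub_apply, xvec]
    by_cases hji : i = j
    · subst hji
      simp [d1, d2, if_neg d2']
    · by_cases hj1 : j = i + 1
      · subst hj1
        simp [hji, d2', d3]
      · by_cases hij1 : i = j + 1
        · have hj : j = i - 1 := by (open Fin.CommRing in linear_combination -hij1)
          subst hj
          have e1 : ¬ (i - 1 : Fin (n+1)) = i := fun h => h1 (by (open Fin.CommRing in linear_combination -h))
          have e2 : ¬ (i - 1 : Fin (n+1)) = i + 1 := fun h => h2 (by (open Fin.CommRing in linear_combination -h))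
          simp [hji, e1, e2, sub_add_cancel]
        · have e1 : ¬ j = i := fun h => hji h.symm
          have e2 : ¬ j = i - 1 := fun h => hij1 (by (open Fin.CommRing in linear_combination -h))
          simp [hji, hj1, hij1, e1, e2]
  · -- second equation
    intro i j hij
    have k1 : ((p⁻¹:ℂˣ):ℂ)^(-(1:ℤ)) * (b:ℂ) = (p:ℂ)*(b:ℂ) := by
      rw [Units.val_inv_eq_inv_val, zpow_neg, zpow_one, inv_inv]
    have k2 : ((p⁻¹:ℂˣ):ℂ)^(-(-1:ℤ)) * ((p:ℂ)*(b:ℂ)) = (b:ℂ) := by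
      rw [Units.val_inv_eq_inv_val, neg_neg, zpow_one, inv_mul_cancel_left₀ hP]
    by_cases hj1 : j = i + 1
    · subst hj1
      have d2' : ¬ (i + 1 : Fin (n+1)) = i := fun h => h1 (by (open Fin.CommRing in linear_combination h))
      have d3 : ¬ (i + 1 : Fin (n+1)) = i - 1 := fun h => h2 (by (open Fin.CommRing in linear_combination h))
      have d2 : ¬ (i : Fin (n+1)) = i + 1 := fun h => h1 (by (open Fin.CommRing in linear_combination -h))
      have d4 : ¬ (i : Fin (n+1)) = i + 1 + 1 := fun h => h2 (by (open Fin.CommRing in linear_combination -h))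
      have eA : (xvec i - xvec (i-1) : Fin (n+1) → ℤ) (i+1) = 0 := by
        simp [xvec, d2', d3]
      have eB : (xvec (i+1) - xvec i : Fin (n+1) → ℤ) (i+1) = 1 := by
        simp [xvec, d2']
      have eC : (xvec (i+1) - xvec i : Fin (n+1) → ℤ) i = -1 := by
        simp [xvec, d2]
      have eD : (xvec (i+1+1) - xvec (i+1) : Fin (n+1) → ℤ) i = 0 := by
        simp [xvec, d2, d4]
      simp only [map_mul, zeta_brk, add_sub_cancel_right, eA, eB, eC, eD,
        neg_zero, zpow_zero, one_mul, k1, k2]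
      ring
    · by_cases hi1 : i = j + 1
      · subst hi1
        have d2' : ¬ (j + 1 : Fin (n+1)) = j := fun h => h1 (by (open Fin.CommRing in linear_combination h))
        have d3 : ¬ (j + 1 : Fin (n+1)) = j - 1 := fun h => h2 (by (open Fin.CommRing in linear_combination h))
        have d2 : ¬ (j : Fin (n+1)) = j + 1 := fun h => h1 (by (open Fin.CommRing in linear_combination -h))
        have d4 : ¬ (j : Fin (n+1)) = j + 1 + 1 := fun h => h2 (by (open Fin.CommRing in linear_combination -h))
        have eA : (xvec j - xvec (j-1) : Fin (n+1) → ℤ) (j+1) = 0 := by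
          simp [xvec, d2', d3]
        have eB : (xvec (j+1) - xvec j : Fin (n+1) → ℤ) (j+1) = 1 := by
          simp [xvec, d2']
        have eC : (xvec (j+1) - xvec j : Fin (n+1) → ℤ) j = -1 := by
          simp [xvec, d2]
        have eD : (xvec (j+1+1) - xvec (j+1) : Fin (n+1) → ℤ) j = 0 := by
          simp [xvec, d2, d4]
        simp only [map_mul, zeta_brk, add_sub_cancel_right, eA, eB, eC, eD,
          neg_zero, zpow_zero, one_mul, k1, k2]
        ring
      · have e1 : ¬ j = i := fun h => hij h.symm
        have e2 : ¬ j = i - 1 := fun h => hi1 (by (open Fin.CommRing in linear_combination -h))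
        have e3 : ¬ i = j - 1 := fun h => hj1 (by (open Fin.CommRing in linear_combination -h))
        have eA : (xvec i - xvec (i-1) : Fin (n+1) → ℤ) j = 0 := by
          simp [xvec, e1, e2]
        have eB : (xvec (i+1) - xvec i : Fin (n+1) → ℤ) j = 0 := by
          simp [xvec, e1, hj1]
        have eC : (xvec j - xvec (j-1) : Fin (n+1) → ℤ) i = 0 := by
          simp [xvec, hij, e3]
        have eD : (xvec (j+1) - xvec j : Fin (n+1) → ℤ) i = 0 := by
          simp [xvec, hij, hi1]
        simp only [map_mul, zeta_brk, eA, eB, eC, eD, neg_zero, zpow_zero, one_mul]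

end
end

section
/- Let A = (a_{ij})_{i,j∈I} be an integer matrix with a_{ii} = 2, fix i ∈ I, and suppose q_i ∈ ℂ^× is not a root of unity. If φ ∈ 𝒜 satisfies ζ_i(φ) − φ = {y_i}_i, then φ = β_i^+ · y_i + φ_0 + β_i^- · y_i^{-1} for some φ_0 ∈ 𝒜_{x_i}, where β_i^+ = −q_i·(q_i − q_i^{-1})^{-2} and β_i^- = −q_i^{-1}·(q_i − q_i^{-1})^{-2}. -/
lemma coeff_add {ι : Type*} (f g : LaurentAlg ι) (μ : ι → ℤ) : (f + g).coeff μ = f.coeff μ + g.coeff μ := rfl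

lemma coeff_sub {ι : Type*} (f g : LaurentAlg ι) (μ : ι → ℤ) : (f - g).coeff μ = f.coeff μ - g.coeff μ := rfl

lemma coeff_smul {ι : Type*} (c : ℂ) (f : LaurentAlg ι) (μ : ι → ℤ) : (c • f).coeff μ = c * f.coeff μ := rfl

lemma coeff_mono {ι : Type*} [DecidableEq (ι → ℤ)] (ν μ : ι → ℤ) :
    (mono ν : LaurentAlg ι).coeff μ = (if ν = μ then (1 : ℂ) else 0) := by
  classical
  simp [mono, AddMonoidAlgebra.coeff_single, Finsupp.single_apply]

lemma zeta_coeff {ι : Type*} (c : ℂˣ) (i : ι) (φ : LaurentAlg ι) (μ : ι → ℤ) :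
    (zeta c i φ).coeff μ = ((c : ℂ)) ^ (-(μ i)) * φ.coeff μ := by
  classical
  induction φ using AddMonoidAlgebra.induction_linear with
  | zero => simp
  | add f g hf hg =>
      rw [map_add, coeff_add, hf, hg]
      simp only [AddMonoidAlgebra.coeff_add, Finsupp.add_apply]
      ring
  | single ν b =>
      rw [zeta, AddMonoidAlgebra.lift_single]
      show (b • (((c ^ (-(ν i)) : ℂˣ) : ℂ) • mono ν)).coeff μ = _
      have hsingle : (AddMonoidAlgebra.single ν b : LaurentAlg ι).coeff μ = (if ν = μ then b else 0) := by
        simp [AddMonoidAlgebra.coeff_single, Finsupp.single_apply]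
      rw [smul_smul, coeff_smul, coeff_mono, hsingle]
      by_cases hμ : ν = μ
      · subst hμ
        simp [Units.val_zpow_eq_zpow_val, zpow_neg]
        ring
      · simp [hμ]

noncomputable section

/-- Lemma A.1: if `ζ_i(φ) − φ = {y_i}_i` with `q_i` not a root of unity,
then `φ = β_i⁺·y_i + φ_0 + β_i⁻·y_i⁻¹` with `φ_0 ∈ 𝒜_{x_i}` (i.e. no monomial of `φ_0`
involves `x_i`), where `β_i^± = −q_i^{±1}(q_i − q_i⁻¹)⁻²`. -/
theorem shift_equation_solution_form {ι : Type*} [Fintype ι] [DecidableEq ι]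
    (a : ι → ι → ℤ) (ha : ∀ k, a k k = 2) (i : ι)
    (s : ℂˣ) (hs : ∀ m : ℕ, 0 < m → s ^ m ≠ 1)
    (φ : LaurentAlg ι)
    (h : zeta s i φ - φ = brk (s : ℂ) 1 (fun j => a j i)) :
    ∃ φ₀ : LaurentAlg ι, (∀ μ ∈ φ₀.coeff.support, μ i = 0) ∧
      φ = (-(s : ℂ) * (((s : ℂ) - (s : ℂ)⁻¹) ^ 2)⁻¹) • mono (fun j => a j i) + φ₀ +
        (-(s : ℂ)⁻¹ * (((s : ℂ) - (s : ℂ)⁻¹) ^ 2)⁻¹) • mono (-(fun j => a j i)) := by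
  letI : DecidableEq (ι → ℤ) := Classical.decEq _
  set ν : ι → ℤ := fun j => a j i with hνdef
  have hνi : ν i = 2 := ha i
  have hs0 : (s : ℂ) ≠ 0 := s.ne_zero
  have h1 : ∀ n : ℤ, n ≠ 0 → (s : ℂ) ^ n ≠ 1 := by
    intro n hn
    have key : ∀ m : ℕ, 0 < m → (s : ℂ) ^ m ≠ 1 := by
      intro m hm hsm
      exact hs m hm (Units.ext (by push_cast; simpa using hsm))
    rcases lt_trichotomy n 0 with hlt | h0 | hgt
    · intro hsn
      have h' : (s : ℂ) ^ (-n) = 1 := by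
        rw [zpow_neg, hsn, inv_one]
      rw [show (-n) = ((-n).toNat : ℤ) by omega, zpow_natCast] at h'
      exact key (-n).toNat (by omega) h'
    · exact absurd h0 hn
    · intro hsn
      rw [show n = (n.toNat : ℤ) by omega, zpow_natCast] at hsn
      exact key n.toNat (by omega) hsn
  have h2 : (s : ℂ) ^ 2 ≠ 1 := by
    have := h1 2 (by norm_num)
    rwa [show ((2 : ℤ)) = ((2 : ℕ) : ℤ) by norm_num, zpow_natCast] at this
  have hs2 : (s : ℂ) ^ 2 - 1 ≠ 0 := sub_ne_zero.mpr h2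
  have hs2' : (s : ℂ) * (s : ℂ) - 1 ≠ 0 := by rwa [← sq]
  have hss : (s : ℂ) - (s : ℂ)⁻¹ ≠ 0 := by
    intro hcon
    apply h2
    have heq : (s : ℂ) = (s : ℂ)⁻¹ := sub_eq_zero.mp hcon
    have hmul : (s : ℂ) * (s : ℂ) = (s : ℂ) * (s : ℂ)⁻¹ := by rw [← heq]
    rw [mul_inv_cancel₀ hs0] at hmul
    rw [sq]; exact hmul
  have key : ∀ μ : ι → ℤ, ((s : ℂ) ^ (-(μ i)) - 1) * φ.coeff μ =
      ((s : ℂ) - (s : ℂ)⁻¹)⁻¹ *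
        ((if ν = μ then (1 : ℂ) else 0) - (if -ν = μ then (1 : ℂ) else 0)) := by
    intro μ
    have hc := congrArg (fun ψ : LaurentAlg ι => ψ.coeff μ) h
    simp only [brk, one_smul, inv_one] at hc
    rw [coeff_sub, coeff_smul, coeff_sub, coeff_mono, coeff_mono, zeta_coeff] at hc
    linear_combination hc
  set β₁ : ℂ := -(s : ℂ) * (((s : ℂ) - (s : ℂ)⁻¹) ^ 2)⁻¹ with hβ₁
  set β₂ : ℂ := -(s : ℂ)⁻¹ * (((s : ℂ) - (s : ℂ)⁻¹) ^ 2)⁻¹ with hβ₂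
  have hνne : ν ≠ -ν := by
    intro hcon
    have hx := congrFun hcon i
    rw [hνi] at hx
    simp only [Pi.neg_apply, hνi] at hx
    norm_num at hx
  refine ⟨φ - (β₁ • mono ν + β₂ • mono (-ν)), ?_, by abel⟩
  intro μ hμ
  by_contra hμi
  have happ : (φ - (β₁ • mono ν + β₂ • mono (-ν))).coeff μ =
      φ.coeff μ - (β₁ * (if ν = μ then (1 : ℂ) else 0) + β₂ * (if -ν = μ then (1 : ℂ) else 0)) := by
    rw [coeff_sub, coeff_add, coeff_smul, coeff_smul, coeff_mono, coeff_mono]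
  rw [Finsupp.mem_support_iff, happ] at hμ
  apply hμ
  by_cases hc1 : ν = μ
  · subst hc1
    rw [if_pos rfl, if_neg (fun hcon => hνne hcon.symm)]
    have hk := key ν
    rw [if_pos rfl, if_neg (fun hcon => hνne hcon.symm), hνi] at hk
    rw [show (s : ℂ) ^ (-(2 : ℤ)) = (((s : ℂ)) ^ 2)⁻¹ by rw [zpow_neg]; norm_cast] at hk
    have hφ : φ.coeff ν = β₁ * 1 + β₂ * 0 := by
      rw [hβ₁, hβ₂]
      field_simp at hk ⊢
      linear_combination -hk
    rw [hφ]; ring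
  · by_cases hc2 : -ν = μ
    · subst hc2
      rw [if_neg hc1, if_pos rfl]
      have hk := key (-ν)
      have hνi' : (-ν) i = -2 := by simp [hνi]
      rw [if_neg hc1, if_pos rfl, hνi'] at hk
      rw [show (s : ℂ) ^ (-(-2 : ℤ)) = ((s : ℂ)) ^ 2 by rw [neg_neg]; norm_cast] at hk
      have hφ : φ.coeff (-ν) = β₁ * 0 + β₂ * 1 := by
        rw [hβ₁, hβ₂]
        field_simp at hk ⊢
        linear_combination hk
      rw [hφ]; ring
    · rw [if_neg hc1, if_neg hc2]
      have hk := key μ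
      rw [if_neg hc1, if_neg hc2] at hk
      have hfac : (s : ℂ) ^ (-(μ i)) - 1 ≠ 0 := sub_ne_zero.mpr (h1 _ (by omega))
      have hz0 : ((s : ℂ) ^ (-(μ i)) - 1) * φ.coeff μ = 0 := by rw [hk]; ring
      rcases mul_eq_zero.mp hz0 with h' | h'
      · exact absurd h' hfac
      · rw [h']; ring

end
end
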